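/- Suppose that for every λ ≥ 0, φ^λ = (w^λ, b^λ) is a λ-regularized upper envelope. Then for every λ ≥ 0 and every i = 1, …, m one has G_i ≤ V_{φ^λ}(s_i) ≤ G_i + √(H*). -/
import Mathlib


theorem stmt_3
    {W : Type*} [NormedAddCommGroup W] [NormedSpace ℝ W]
    {S : Type*}
    (f : W → S → ℝ)
    (hf_cont : ∀ s : S, Continuous fun w => f w s)
    (hf_zero : ∀ s : S, f 0 s = 0)
    (m : ℕ) (hm : 0 < m)
    (s : Fin m → S) (G : Fin m → ℝ)
    (Gstar : ℝ)
    (hGstar : Gstar = Finset.univ.sup' ⟨⟨0, hm⟩, Finset.mem_univ _⟩ G)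
    (Hstar : ℝ)
    (hHstar : Hstar = ∑ i, (Gstar - G i) ^ 2)
    (φ : ℝ → W × ℝ)
    (hfeas : ∀ lam : ℝ, 0 ≤ lam → ∀ i : Fin m, G i ≤ f (φ lam).1 (s i) + (φ lam).2)
    (hmin : ∀ lam : ℝ, 0 ≤ lam → ∀ ψ : W × ℝ,
      (∀ i : Fin m, G i ≤ f ψ.1 (s i) + ψ.2) →
      (∑ i, (f (φ lam).1 (s i) + (φ lam).2 - G i) ^ 2) + lam * ‖(φ lam).1‖ ^ 2 ≤
        (∑ i, (f ψ.1 (s i) + ψ.2 - G i) ^ 2) + lam * ‖ψ.1‖ ^ 2) :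
    ∀ lam : ℝ, 0 ≤ lam → ∀ i : Fin m,
      G i ≤ f (φ lam).1 (s i) + (φ lam).2
      ∧ f (φ lam).1 (s i) + (φ lam).2 ≤ G i + Real.sqrt Hstar := by
  intro lam hlam i
  refine ⟨hfeas lam hlam i, ?_⟩
  -- candidate ψ = (0, Gstar)
  have hGle : ∀ j : Fin m, G j ≤ Gstar := by
    intro j
    rw [hGstar]
    exact Finset.le_sup' G (Finset.mem_univ j)
  have hcand : ∀ j : Fin m, G j ≤ f (0 : W) (s j) + Gstar := by
    intro j; rw [hf_zero]; simpa using hGle j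
  have hJ := hmin lam hlam ((0 : W), Gstar) hcand
  simp only [norm_zero] at hJ
  have hJ' : (∑ j, (f (φ lam).1 (s j) + (φ lam).2 - G j) ^ 2) ≤ Hstar := by
    have hterm : (∑ j, (f (0 : W) (s j) + Gstar - G j) ^ 2) = Hstar := by
      rw [hHstar]
      refine Finset.sum_congr rfl fun j _ => ?_
      rw [hf_zero]; ring
    have hnorm : lam * ‖(φ lam).1‖ ^ 2 ≥ 0 :=
      mul_nonneg hlam (sq_nonneg _)
    nlinarith [hJ, hterm]
  have hsq : (f (φ lam).1 (s i) + (φ lam).2 - G i) ^ 2 ≤ Hstar := by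
    calc (f (φ lam).1 (s i) + (φ lam).2 - G i) ^ 2
        ≤ ∑ j, (f (φ lam).1 (s j) + (φ lam).2 - G j) ^ 2 :=
          Finset.single_le_sum (f := fun j => (f (φ lam).1 (s j) + (φ lam).2 - G j) ^ 2) (fun j _ => sq_nonneg _) (Finset.mem_univ i)
      _ ≤ Hstar := hJ'
  have hpos : 0 ≤ f (φ lam).1 (s i) + (φ lam).2 - G i :=
    sub_nonneg.mpr (hfeas lam hlam i)
  have := Real.sqrt_le_sqrt hsq
  rw [Real.sqrt_sq hpos] at this
  linarith
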